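/- If (a_n) is a strictly decreasing sequence of positive reals converging to 0 with limsup_{n→∞} a_{n+1}/a_n < 1, then for every Lebesgue measurable set E ⊆ ℝ of positive Lebesgue measure there exists a bi-Lipschitz map f : ℝ → ℝ with f(a_n) ∈ E for all n. -/

import Mathlib

open MeasureTheory Filter
open Metric Set
open scoped Topology ENNReal

/-- `f : ℝ → ℝ` is bi-Lipschitz. -/
def BiLipschitz (f : ℝ → ℝ) : Prop :=
  ∃ L : ℝ, 1 ≤ L ∧ ∀ x y : ℝ, L⁻¹ * |x - y| ≤ |f x - f y| ∧ |f x - f y| ≤ L * |x - y|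

/-- Auxiliary: there is a function with prescribed slope `s n` on `[a (n+1), a n]`,
slopes between `m` and `M`, and value `x` at `0`. -/
lemma aux_interp (a : ℕ → ℝ) (hpos : ∀ n, 0 < a n) (hanti : StrictAnti a)
    (hlim : Tendsto a atTop (nhds 0)) (s : ℕ → ℝ) (m M : ℝ) (hm : 0 < m)
    (hs : ∀ n, m ≤ s n ∧ s n ≤ M) (x : ℝ) :
    ∃ f : ℝ → ℝ, f 0 = x ∧
      (∀ p r : ℝ, p ≤ r → m * (r - p) ≤ f r - f p ∧ f r - f p ≤ M * (r - p)) ∧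
      (∀ n, f (a n) - f (a (n + 1)) = s n * (a n - a (n + 1))) := by
  classical
  have hmM : m ≤ M := le_trans (hs 0).1 (hs 0).2
  have hex : ∀ u : ℝ, ∃ n, a (n + 1) < u ∨ u ≤ 0 := by
    intro u
    rcases le_or_gt u 0 with h | h
    · exact ⟨0, Or.inr h⟩
    · obtain ⟨n, hn⟩ := (hlim.eventually (eventually_lt_nhds h)).exists
      exact ⟨n, Or.inl (lt_trans (hanti (Nat.lt_succ_self n)) hn)⟩
  set σ : ℝ → ℝ := (Set.Ioc 0 (a 0)).piecewise (fun u => s (Nat.find (hex u))) (fun _ => m)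
    with hσdef
  have hNFspec : ∀ n, ∀ u ∈ Set.Ioc (a (n + 1)) (a n), Nat.find (hex u) = n := by
    intro n u hu
    have hu0 : 0 < u := lt_trans (hpos _) hu.1
    rw [Nat.find_eq_iff]
    refine ⟨Or.inl hu.1, fun k hk => ?_⟩
    push_neg
    refine ⟨?_, hu0⟩
    exact le_trans hu.2 (hanti.antitone (Nat.succ_le_of_lt hk))
  have hσ_eq : ∀ n, ∀ u ∈ Set.Ioc (a (n + 1)) (a n), σ u = s n := by
    intro n u hu
    have hmem : u ∈ Set.Ioc 0 (a 0) :=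
      ⟨lt_trans (hpos _) hu.1, le_trans hu.2 (hanti.antitone (Nat.zero_le n))⟩
    rw [hσdef, Set.piecewise_eq_of_mem _ _ _ hmem, hNFspec n u hu]
  have hσ_bounds : ∀ u, m ≤ σ u ∧ σ u ≤ M := by
    intro u
    rw [hσdef]
    by_cases h : u ∈ Set.Ioc 0 (a 0)
    · rw [Set.piecewise_eq_of_mem _ _ _ h]; exact hs _
    · rw [Set.piecewise_eq_of_notMem _ _ _ h]; exact ⟨le_refl m, hmM⟩
  have hσ_meas : Measurable σ := by
    apply Measurable.piecewise measurableSet_Ioc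
    · exact Measurable.find (fun n => measurable_const)
        (fun n => by
          have : {u : ℝ | a (n + 1) < u ∨ u ≤ 0} = Set.Ioi (a (n + 1)) ∪ Set.Iic 0 := by
            ext u; simp [Set.mem_Ioi, Set.mem_Iic]
          rw [this]
          exact measurableSet_Ioi.union measurableSet_Iic) hex
    · exact measurable_const
  have hσ_int : ∀ p r : ℝ, IntervalIntegrable σ volume p r := by
    intro p r
    rw [intervalIntegrable_iff]
    refine MeasureTheory.Integrable.mono' (g := fun _ => M)
      (integrableOn_const measure_Ioc_lt_top.ne)
      hσ_meas.aestronglyMeasurable.restrict (ae_of_all _ fun u => ?_)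
    rw [Real.norm_eq_abs, abs_le]
    exact ⟨by linarith [(hσ_bounds u).1], (hσ_bounds u).2⟩
  refine ⟨fun t => x + ∫ u in (0:ℝ)..t, σ u, by simp, ?_, ?_⟩
  · intro p r hpr
    have hfr : (x + ∫ u in (0:ℝ)..r, σ u) - (x + ∫ u in (0:ℝ)..p, σ u) = ∫ u in p..r, σ u := by
      rw [add_sub_add_left_eq_sub]
      exact intervalIntegral.integral_interval_sub_left (hσ_int 0 r) (hσ_int 0 p)
    rw [hfr]
    constructor
    · calc m * (r - p) = ∫ _ in p..r, m := by
            rw [intervalIntegral.integral_const, smul_eq_mul, mul_comm]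
        _ ≤ ∫ u in p..r, σ u := intervalIntegral.integral_mono_on hpr
            intervalIntegrable_const (hσ_int p r) (fun u _ => (hσ_bounds u).1)
    · calc (∫ u in p..r, σ u) ≤ ∫ _ in p..r, M := intervalIntegral.integral_mono_on hpr
            (hσ_int p r) intervalIntegrable_const (fun u _ => (hσ_bounds u).2)
        _ = M * (r - p) := by rw [intervalIntegral.integral_const, smul_eq_mul, mul_comm]
  · intro n
    have h1 : (x + ∫ u in (0:ℝ)..(a n), σ u) - (x + ∫ u in (0:ℝ)..(a (n + 1)), σ u)
        = ∫ u in (a (n + 1))..(a n), σ u := by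
      rw [add_sub_add_left_eq_sub]
      exact intervalIntegral.integral_interval_sub_left (hσ_int 0 (a n)) (hσ_int 0 (a (n + 1)))
    rw [h1, intervalIntegral.integral_of_le (hanti (Nat.lt_succ_self n)).le,
      MeasureTheory.setIntegral_congr_fun measurableSet_Ioc (fun u hu => hσ_eq n u hu),
      MeasureTheory.setIntegral_const,
      Real.volume_real_Ioc_of_le (hanti (Nat.lt_succ_self n)).le, smul_eq_mul, mul_comm]

theorem stmt_2 (a : ℕ → ℝ) (hpos : ∀ n, 0 < a n) (hanti : StrictAnti a)
    (hlim : Tendsto a atTop (nhds 0))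
    (hratio : limsup (fun n => a (n + 1) / a n) atTop < 1)
    (E : Set ℝ) (hE : MeasurableSet E) (hposE : 0 < volume E) :
    ∃ f : ℝ → ℝ, BiLipschitz f ∧ ∀ n, f (a n) ∈ E := by
  classical
  -- Step A: a uniform ratio bound `q`
  obtain ⟨q, hqpos, hqlt1, hstep⟩ :
      ∃ q : ℝ, 0 < q ∧ q < 1 ∧ ∀ n, a (n + 1) ≤ q * a n := by
    have hratlt1 : ∀ n, a (n + 1) / a n < 1 :=
      fun n => (div_lt_one (hpos n)).2 (hanti (Nat.lt_succ_self n))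
    have hbdd : IsBoundedUnder (· ≤ ·) atTop (fun n => a (n + 1) / a n) :=
      isBoundedUnder_of ⟨1, fun n => (hratlt1 n).le⟩
    set r := limsup (fun n => a (n + 1) / a n) atTop with hr
    have hb0 : ∀ᶠ n in atTop, a (n + 1) / a n < (r + 1) / 2 :=
      eventually_lt_of_limsup_lt (by rw [← hr]; linarith) hbdd
    obtain ⟨N, hN⟩ := eventually_atTop.1 hb0
    set q1 : ℝ := max ((r + 1) / 2) (1 / 2) with hq1
    have hq1lt : q1 < 1 := max_lt (by linarith) (by norm_num)
    set S : Finset ℝ := insert q1 ((Finset.range N).image fun k => a (k + 1) / a k) with hS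
    have hSne : S.Nonempty := Finset.insert_nonempty _ _
    set q : ℝ := S.max' hSne with hq
    have hq1q : q1 ≤ q := Finset.le_max' _ _ (Finset.mem_insert_self _ _)
    have hqpos : 0 < q := lt_of_lt_of_le (by norm_num : (0:ℝ) < 1/2)
      (le_trans (le_max_right _ _) hq1q)
    have hqlt1 : q < 1 := by
      refine (Finset.max'_lt_iff _ hSne).2 fun y hy => ?_
      rcases Finset.mem_insert.1 hy with h | h
      · exact h ▸ hq1lt
      · obtain ⟨k, _, rfl⟩ := Finset.mem_image.1 h
        exact hratlt1 k
    refine ⟨q, hqpos, hqlt1, fun n => ?_⟩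
    have hle : a (n + 1) / a n ≤ q := by
      rcases lt_or_ge n N with h | h
      · refine Finset.le_max' S _ ?_
        rw [hS]
        exact Finset.mem_insert_of_mem
          (Finset.mem_image.2 ⟨n, Finset.mem_range.2 h, rfl⟩)
      · exact le_trans (hN n h).le (le_trans (le_max_left _ _) hq1q)
    calc a (n + 1) = (a (n + 1) / a n) * a n := by
          rw [div_mul_cancel₀ _ (ne_of_gt (hpos n))]
      _ ≤ q * a n := mul_le_mul_of_nonneg_right hle (hpos n).le
  set c : ℝ := (1 + q) / 2 with hc
  have hc0 : 0 < c := by rw [hc]; linarith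
  have hc1 : c < 1 := by rw [hc]; linarith
  have hqc : q < c := by rw [hc]; linarith
  -- Step B: choose a density point and points of E at the right locations
  obtain ⟨x, l, hlpos, hmem⟩ :
      ∃ x : ℝ, ∃ l : ℝ, 0 < l ∧
        ∀ n, ∃ y, y ∈ E ∧ y ∈ Set.Icc (x + c * (l * a n)) (x + l * a n) := by
    have hbes := Besicovitch.ae_tendsto_measure_inter_div_of_measurableSet volume hE
    obtain ⟨x, hxE, hx⟩ : ∃ x, x ∈ E ∧ Tendsto
        (fun r => volume (E ∩ closedBall x r) / volume (closedBall x r)) (𝓝[>] 0) (𝓝 1) := by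
      by_contra hcon
      push_neg at hcon
      have hsub : E ⊆ {x | ¬ Tendsto
          (fun r => volume (E ∩ closedBall x r) / volume (closedBall x r)) (𝓝[>] 0)
          (𝓝 (E.indicator 1 x))} := by
        intro y hy hty
        have : E.indicator (1 : ℝ → ℝ≥0∞) y = 1 := Set.indicator_of_mem hy 1
        exact hcon y hy (by rwa [this] at hty)
      have h0 : volume {x | ¬ Tendsto
          (fun r => volume (E ∩ closedBall x r) / volume (closedBall x r)) (𝓝[>] 0)
          (𝓝 (E.indicator 1 x))} = 0 := by
        rw [← MeasureTheory.ae_iff]; exact hbes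
      exact absurd (measure_mono_null hsub h0) (ne_of_gt hposE)
    set θ : ℝ≥0∞ := ENNReal.ofReal ((3 + c) / 4) with hθ
    have hθlt1 : θ < 1 := by
      rw [hθ, ← ENNReal.ofReal_one]
      exact (ENNReal.ofReal_lt_ofReal_iff (by norm_num)).2 (by linarith)
    have hev : ∀ᶠ r in 𝓝[>] (0:ℝ),
        θ < volume (E ∩ closedBall x r) / volume (closedBall x r) :=
      hx.eventually (eventually_gt_nhds hθlt1)
    obtain ⟨δ, hδmem, hδ⟩ := mem_nhdsGT_iff_exists_Ioc_subset.1 hev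
    have hδpos : 0 < δ := hδmem
    refine ⟨x, δ / a 0, div_pos hδpos (hpos 0), fun n => ?_⟩
    set l : ℝ := δ / a 0 with hl
    have hlpos : 0 < l := div_pos hδpos (hpos 0)
    set rr : ℝ := l * a n with hrr
    have hrrpos : 0 < rr := mul_pos hlpos (hpos n)
    have hrrδ : rr ≤ δ := by
      have : l * a n ≤ l * a 0 :=
        mul_le_mul_of_nonneg_left (hanti.antitone (Nat.zero_le n)) hlpos.le
      calc rr ≤ l * a 0 := this
        _ = δ := by rw [hl, div_mul_cancel₀ _ (ne_of_gt (hpos 0))]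
    have hratio_gt : θ < volume (E ∩ closedBall x rr) / volume (closedBall x rr) :=
      hδ ⟨hrrpos, hrrδ⟩
    by_contra hcon
    push_neg at hcon
    have hempty : E ∩ Set.Icc (x + c * rr) (x + rr) = ∅ := by
      rw [Set.eq_empty_iff_forall_notMem]
      rintro y ⟨hyE, hyI⟩
      exact absurd hyI (by intro h; exact (hcon y hyE) h)
    have hIsub : Set.Icc (x + c * rr) (x + rr) ⊆ closedBall x rr := by
      rw [Real.closedBall_eq_Icc]
      apply Set.Icc_subset_Icc <;> nlinarith
    have hEB : E ∩ closedBall x rr ⊆ closedBall x rr \ Set.Icc (x + c * rr) (x + rr) := by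
      rintro y ⟨hyE, hyB⟩
      refine ⟨hyB, fun hyI => ?_⟩
      rw [Set.eq_empty_iff_forall_notMem] at hempty
      exact hempty y ⟨hyE, hyI⟩
    have hIvol : volume (Set.Icc (x + c * rr) (x + rr)) = ENNReal.ofReal ((1 - c) * rr) := by
      rw [Real.volume_Icc]; ring_nf
    have hBvol : volume (closedBall x rr) = ENNReal.ofReal (2 * rr) := Real.volume_closedBall x rr
    have hmeas : volume (E ∩ closedBall x rr) ≤ ENNReal.ofReal ((1 + c) * rr) := by
      calc volume (E ∩ closedBall x rr)
          ≤ volume (closedBall x rr \ Set.Icc (x + c * rr) (x + rr)) := measure_mono hEB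
        _ = volume (closedBall x rr) - volume (Set.Icc (x + c * rr) (x + rr)) :=
            measure_diff hIsub measurableSet_Icc.nullMeasurableSet (by simp [hIvol])
        _ = ENNReal.ofReal (2 * rr) - ENNReal.ofReal ((1 - c) * rr) := by rw [hIvol, hBvol]
        _ = ENNReal.ofReal (2 * rr - (1 - c) * rr) := by
            rw [← ENNReal.ofReal_sub _ (by nlinarith)]
        _ = ENNReal.ofReal ((1 + c) * rr) := by ring_nf
    have hfinal : volume (E ∩ closedBall x rr) / volume (closedBall x rr)
        ≤ ENNReal.ofReal ((1 + c) / 2) := by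
      calc volume (E ∩ closedBall x rr) / volume (closedBall x rr)
          ≤ ENNReal.ofReal ((1 + c) * rr) / ENNReal.ofReal (2 * rr) := by
            rw [hBvol]; exact ENNReal.div_le_div_right hmeas _
        _ = ENNReal.ofReal ((1 + c) * rr / (2 * rr)) := by
            rw [ENNReal.ofReal_div_of_pos (by linarith)]
        _ = ENNReal.ofReal ((1 + c) / 2) := by
            congr 1
            field_simp
    have hlt : θ < ENNReal.ofReal ((1 + c) / 2) := lt_of_lt_of_le hratio_gt hfinal
    rw [hθ] at hlt
    have := (ENNReal.ofReal_lt_ofReal_iff (by linarith)).1 hlt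
    linarith
  -- Step C: the points b n and the slopes s n
  choose b hbE hbI using hmem
  have hgap : ∀ n, (1 - q) * a n ≤ a n - a (n + 1) := by
    intro n; have := hstep n; nlinarith
  have hgap_pos : ∀ n, 0 < a n - a (n + 1) := by
    intro n; have := hanti (Nat.lt_succ_self n); linarith
  have hbgap_lower : ∀ n, (1 - q) / 2 * (l * a n) ≤ b n - b (n + 1) := by
    intro n
    have h1 : x + c * (l * a n) ≤ b n := (hbI n).1
    have h2 : b (n + 1) ≤ x + l * a (n + 1) := (hbI (n + 1)).2
    have h3 : a (n + 1) ≤ q * a n := hstep n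
    have h4 : l * a (n + 1) ≤ l * (q * a n) := mul_le_mul_of_nonneg_left h3 hlpos.le
    have h5 : c * (l * a n) - l * (q * a n) = (1 - q) / 2 * (l * a n) := by
      rw [hc]; ring
    linarith
  have hbgap_upper : ∀ n, b n - b (n + 1) ≤ l * a n := by
    intro n
    have h1 : b n ≤ x + l * a n := (hbI n).2
    have h2 : x + c * (l * a (n + 1)) ≤ b (n + 1) := (hbI (n + 1)).1
    have h3 : 0 ≤ c * (l * a (n + 1)) :=
      mul_nonneg hc0.le (mul_nonneg hlpos.le (hpos (n + 1)).le)
    linarith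
  set s : ℕ → ℝ := fun n => (b n - b (n + 1)) / (a n - a (n + 1)) with hsdef
  set m : ℝ := l * (1 - q) / 2 with hmdef
  set M : ℝ := l / (1 - q) with hMdef
  have hq1' : 0 < 1 - q := by linarith
  have hm : 0 < m := by rw [hmdef]; positivity
  have hs : ∀ n, m ≤ s n ∧ s n ≤ M := by
    intro n
    constructor
    · rw [hsdef, le_div_iff₀ (hgap_pos n)]
      have h1 : m * (a n - a (n + 1)) ≤ m * a n := by
        have := hanti (Nat.lt_succ_self n); have := hpos (n + 1); nlinarith
      have h2 : m * a n = (1 - q) / 2 * (l * a n) := by rw [hmdef]; ring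
      linarith [hbgap_lower n]
    · rw [hsdef, div_le_iff₀ (hgap_pos n)]
      have h1 : M * ((1 - q) * a n) ≤ M * (a n - a (n + 1)) := by
        have hMpos : 0 < M := by rw [hMdef]; positivity
        exact mul_le_mul_of_nonneg_left (hgap n) hMpos.le
      have h2 : M * ((1 - q) * a n) = l * a n := by
        rw [hMdef]
        field_simp
      linarith [hbgap_upper n]
  -- Step D: the interpolating function
  obtain ⟨f, hf0, hfkey, hfnode⟩ := aux_interp a hpos hanti hlim s m M hm hs x
  have hnode_val : ∀ n, f (a n) - f (a (n + 1)) = b n - b (n + 1) := by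
    intro n
    rw [hfnode n, hsdef]
    exact div_mul_cancel₀ _ (ne_of_gt (hgap_pos n))
  -- the constant `f (a n) - b n` tends to zero, hence is zero
  have hconst : ∀ n, f (a n) - b n = f (a 0) - b 0 := by
    intro n
    induction n with
    | zero => rfl
    | succ k ih => have := hnode_val k; linarith
  have hb_lim : Tendsto b atTop (𝓝 x) := by
    have h1 : ∀ n, |b n - x| ≤ l * a n := by
      intro n
      rw [abs_le]
      have h1 := (hbI n).1
      have h2 := (hbI n).2
      have h3 : 0 ≤ c * (l * a n) :=
        mul_nonneg hc0.le (mul_nonneg hlpos.le (hpos n).le)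
      constructor <;> nlinarith
    have h2 : Tendsto (fun n => l * a n) atTop (𝓝 0) := by
      have := hlim.const_mul l
      simpa using this
    have h3 : Tendsto (fun n => b n - x) atTop (𝓝 0) :=
      squeeze_zero_norm h1 h2
    have := h3.add_const x
    simpa using this
  have hfa_lim : Tendsto (fun n => f (a n)) atTop (𝓝 x) := by
    have h1 : ∀ n, |f (a n) - x| ≤ M * a n := by
      intro n
      have hk := hfkey 0 (a n) (hpos n).le
      rw [hf0] at hk
      rw [abs_le]
      have hMpos : 0 < M := by rw [hMdef]; positivity
      constructor
      · nlinarith [hk.1, hpos n, hm.le]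
      · have := hk.2; simpa using this
    have h2 : Tendsto (fun n => M * a n) atTop (𝓝 0) := by
      have := hlim.const_mul M
      simpa using this
    have h3 : Tendsto (fun n => f (a n) - x) atTop (𝓝 0) :=
      squeeze_zero_norm h1 h2
    have := h3.add_const x
    simpa using this
  have hzero : f (a 0) - b 0 = 0 := by
    have h1 : Tendsto (fun n => f (a n) - b n) atTop (𝓝 0) := by
      have := hfa_lim.sub hb_lim
      simpa using this
    have h2 : Tendsto (fun _ : ℕ => f (a 0) - b 0) atTop (𝓝 0) := by
      exact Tendsto.congr (fun n => hconst n) h1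
    exact tendsto_nhds_unique tendsto_const_nhds h2
  have hnode : ∀ n, f (a n) = b n := by
    intro n
    have := hconst n
    linarith
  -- Conclusion
  have hMpos : 0 < M := by rw [hMdef]; positivity
  set L : ℝ := max 1 (max M m⁻¹) with hL
  have hL1 : (1:ℝ) ≤ L := le_max_left _ _
  have hML : M ≤ L := le_trans (le_max_left _ _) (le_max_right _ _)
  have hLinv : L⁻¹ ≤ m := by
    have h1 : m⁻¹ ≤ L := le_trans (le_max_right _ _) (le_max_right _ _)
    have h2 : L⁻¹ ≤ (m⁻¹)⁻¹ := by
      apply inv_anti₀ (by positivity) h1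
    rwa [inv_inv] at h2
  refine ⟨f, ⟨L, hL1, ?_⟩, fun n => (hnode n) ▸ (hbE n)⟩
  intro u v
  have main : ∀ p r : ℝ, p ≤ r →
      L⁻¹ * |p - r| ≤ |f p - f r| ∧ |f p - f r| ≤ L * |p - r| := by
    intro p r hpr
    obtain ⟨hlow, hhigh⟩ := hfkey p r hpr
    have habs1 : |p - r| = r - p := by rw [abs_sub_comm, abs_of_nonneg (by linarith)]
    have hfnn : 0 ≤ f r - f p := le_trans (by nlinarith [hm.le]) hlow
    have habs2 : |f p - f r| = f r - f p := by rw [abs_sub_comm, abs_of_nonneg hfnn]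
    rw [habs1, habs2]
    constructor
    · calc L⁻¹ * (r - p) ≤ m * (r - p) :=
            mul_le_mul_of_nonneg_right hLinv (by linarith)
        _ ≤ f r - f p := hlow
    · calc f r - f p ≤ M * (r - p) := hhigh
        _ ≤ L * (r - p) := mul_le_mul_of_nonneg_right hML (by linarith)
  rcases le_total u v with h | h
  · exact main u v h
  · have := main v u h
    rw [abs_sub_comm v u, abs_sub_comm (f v) (f u)] at this
    exact this
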